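/- arXiv:1405.6616 — 2 statements merged into one kernel-verified Lean document; each statement's English description precedes it below -/
import Mathlib

section
/- Let G be a finite group and N a normal subgroup. If ρ is a complex representation of G/N whose inflation to G is a virtual permutation representation of G (i.e. an integer linear combination of permutation representations C[G/H]), then ρ is itself a virtual permutation representation of G/N. In other words, the inflation map induces an injection C(G/N) → C(G), where C(G) = R_Q(G)/Perm(G). -/
open scoped BigOperators
open Classical

set_option linter.unusedSectionVars false
set_option maxHeartbeats 1000000

/-- The permutation character of `G` acting on `G ⧸ H`. -/
noncomputable def permChar {G : Type} [Group G] [Fintype G] (H : Subgroup G) : G → ℂ :=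
  fun g => (Fintype.card {x : G ⧸ H // g • x = x} : ℂ)

/-- The additive group of virtual permutation characters of `G`. -/
noncomputable def PermRing (G : Type) [Group G] [Fintype G] : AddSubgroup (G → ℂ) :=
  AddSubgroup.closure { f | ∃ H : Subgroup G, f = permChar H }

section Aux
variable {G : Type} [Group G] [Fintype G] (N : Subgroup G) [N.Normal]

lemma qcoe_mul (a b : G) : ((↑a : G ⧸ N)⁻¹ * ↑b) = ((↑(a⁻¹ * b) : G ⧸ N)) := by simp

noncomputable def qmap (H : Subgroup G) :
    G ⧸ H → (G ⧸ N) ⧸ (H.map (QuotientGroup.mk' N)) :=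
  Quotient.map' (fun a => (↑a : G ⧸ N))
    (fun a b hab => by
      rw [QuotientGroup.leftRel_apply] at hab
      rw [QuotientGroup.leftRel_apply, qcoe_mul]
      exact ⟨a⁻¹ * b, hab, rfl⟩)

lemma qmap_mk (H : Subgroup G) (a : G) :
    qmap N H (↑a) = ((↑(↑a : G ⧸ N)) : (G ⧸ N) ⧸ (H.map (QuotientGroup.mk' N))) := rfl

lemma qmap_smul (H : Subgroup G) (g : G) (x : G ⧸ H) :
    qmap N H (g • x) = (↑g : G ⧸ N) • qmap N H x := by
  induction x using QuotientGroup.induction_on with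
  | H a => rw [MulAction.Quotient.smul_mk, qmap_mk, qmap_mk, MulAction.Quotient.smul_mk]; rfl

lemma qmap_eq_iff (H : Subgroup G) (x x' : G ⧸ H) :
    qmap N H x = qmap N H x' ↔ ∃ n : N, (n : G) • x' = x := by
  induction x using QuotientGroup.induction_on with
  | H a =>
  induction x' using QuotientGroup.induction_on with
  | H b =>
  rw [qmap_mk, qmap_mk, QuotientGroup.eq, qcoe_mul]
  constructor
  · rintro hk
    rw [Subgroup.mem_map] at hk
    obtain ⟨h, hh, hhb⟩ := hk
    rw [QuotientGroup.mk'_apply, QuotientGroup.eq] at hhb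
    refine ⟨⟨a * h * (h⁻¹ * (a⁻¹*b))⁻¹ * h⁻¹ * a⁻¹, ?_⟩, ?_⟩
    · have h1 := Subgroup.Normal.conj_mem ‹N.Normal› _ (N.inv_mem hhb) h
      have h2 := Subgroup.Normal.conj_mem ‹N.Normal› _ h1 a
      convert h2 using 1; group
    · show (_ : G) • (QuotientGroup.mk b : G ⧸ H) = ↑a
      rw [MulAction.Quotient.smul_mk, QuotientGroup.eq]
      convert H.inv_mem hh using 1; simp only [smul_eq_mul]; group
  · rintro ⟨⟨n, hn⟩, hnb⟩
    rw [MulAction.Quotient.smul_mk, QuotientGroup.eq] at hnb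
    rw [Subgroup.mem_map]
    refine ⟨((n*b)⁻¹ * a)⁻¹, H.inv_mem hnb, ?_⟩
    rw [QuotientGroup.mk'_apply, QuotientGroup.eq]
    have := Subgroup.Normal.conj_mem ‹N.Normal› _ (N.inv_mem hn) b⁻¹
    convert this using 1
    group

-- the set of n : N with (g*n) • x = x has the cardinality of the stabilizer of x in N,
-- provided it is nonempty
lemma card_slice (H : Subgroup G) (g : G) (x : G ⧸ H) (n₁ : N)
    (hn₁ : (g * (n₁ : G)) • x = x) :
    Fintype.card {n : N // (g * (n : G)) • x = x}
      = Fintype.card (MulAction.stabilizer N x) := by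
  have key : ∀ n : N, ((g * (n : G)) • x = x) ↔ ((n₁⁻¹ * n) • x = x) := by
    intro n
    have h1 : (n₁ : G) • x = g⁻¹ • x := by
      rw [eq_inv_smul_iff, ← mul_smul]; exact hn₁
    constructor
    · intro h
      have h2 : (n : G) • x = g⁻¹ • x := by rw [eq_inv_smul_iff, ← mul_smul]; exact h
      show ((n₁⁻¹ * n : N) : G) • x = x
      push_cast
      rw [mul_smul, h2, ← h1, ← mul_smul]
      simp
    · intro h
      have h2 : ((n₁⁻¹ * n : N) : G) • x = x := h
      push_cast at h2
      rw [mul_smul] at h2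
      have h3 : (n : G) • x = (n₁ : G) • x := by
        have := congrArg (fun z => (n₁ : G) • z) h2
        simpa [← mul_smul] using this
      rw [mul_smul, h3, ← mul_smul]; exact hn₁
  refine Fintype.card_congr ?_
  refine { toFun := fun p => ⟨n₁⁻¹ * p.1, ?_⟩
           invFun := fun s => ⟨n₁ * s.1, ?_⟩
           left_inv := ?_, right_inv := ?_ }
  · exact MulAction.mem_stabilizer_iff.2 ((key p.1).1 p.2)
  · refine (key _).2 ?_
    have hs := MulAction.mem_stabilizer_iff.1 s.2
    show (n₁⁻¹ * (n₁ * s.1)) • x = x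
    rw [show n₁⁻¹ * (n₁ * s.1) = s.1 by group]
    exact hs
  · intro p; ext : 1; show n₁ * (n₁⁻¹ * p.1) = p.1; group
  · intro s; ext : 1; show n₁⁻¹ * (n₁ * s.1) = s.1; group


lemma card_stab_eq (H : Subgroup G) (x₀ x : G ⧸ H) (m : N) (hm : (m : G) • x₀ = x) :
    Fintype.card (MulAction.stabilizer N x) = Fintype.card (MulAction.stabilizer N x₀) := by
  have hms : m • x₀ = x := hm
  have h := MulAction.stabilizer_smul_eq_stabilizer_map_conj m x₀
  rw [hms] at h
  exact Fintype.card_congr ((MulEquiv.subgroupCongr h).toEquiv.trans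
    (Subgroup.equivMapOfInjective _ _ (MulAut.conj m).injective).symm.toEquiv)

lemma card_fiber (H : Subgroup G) (g : G)
    (y : (G ⧸ N) ⧸ (H.map (QuotientGroup.mk' N))) (hy : (↑g : G ⧸ N) • y = y) :
    Fintype.card {p : (Σ n : N, {x : G ⧸ H // (g * (n : G)) • x = x}) // qmap N H p.2.1 = y}
      = Fintype.card N := by
  obtain ⟨x₀, hx₀⟩ : ∃ x₀ : G ⧸ H, qmap N H x₀ = y := by
    induction y using QuotientGroup.induction_on with
    | H q =>
      induction q using QuotientGroup.induction_on with
      | H b => exact ⟨↑b, rfl⟩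
  have e1 : {p : (Σ n : N, {x : G ⧸ H // (g * (n : G)) • x = x}) // qmap N H p.2.1 = y} ≃
      Σ x : {x : G ⧸ H // qmap N H x = y}, {n : N // (g * (n : G)) • x.1 = x.1} :=
    { toFun := fun p => ⟨⟨p.1.2.1, p.2⟩, ⟨p.1.1, p.1.2.2⟩⟩
      invFun := fun q => ⟨⟨q.2.1, ⟨q.1.1, q.2.2⟩⟩, q.1.2⟩
      left_inv := fun p => rfl
      right_inv := fun q => rfl }
  rw [Fintype.card_congr e1, Fintype.card_sigma]
  have hconst : ∀ x : {x : G ⧸ H // qmap N H x = y},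
      Fintype.card {n : N // (g * (n : G)) • x.1 = x.1}
        = Fintype.card (MulAction.stabilizer N x₀) := by
    intro x
    -- nonemptiness witness
    have hq : qmap N H (g⁻¹ • x.1) = qmap N H x.1 := by
      rw [qmap_smul, x.2]
      have : ((↑(g⁻¹) : G ⧸ N)) • y = y := by
        have := congrArg (fun z => (↑g : G ⧸ N)⁻¹ • z) hy
        simpa [← mul_smul] using this.symm
      rw [this]
    obtain ⟨n₁, hn₁⟩ := (qmap_eq_iff N H _ _).1 hq
    have hfix : (g * (n₁ : G)) • x.1 = x.1 := by
      rw [mul_smul, hn₁, smul_inv_smul]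
    rw [card_slice N H g x.1 n₁ hfix]
    obtain ⟨m, hm⟩ := (qmap_eq_iff N H x.1 x₀).1 (x.2.trans hx₀.symm)
    exact card_stab_eq N H x₀ x.1 m hm
  calc ∑ x : {x : G ⧸ H // qmap N H x = y},
        Fintype.card {n : N // (g * (n : G)) • x.1 = x.1}
      = ∑ _x : {x : G ⧸ H // qmap N H x = y},
          Fintype.card (MulAction.stabilizer N x₀) := by
        exact Finset.sum_congr rfl (fun x _ => hconst x)
    _ = Fintype.card {x : G ⧸ H // qmap N H x = y}
          * Fintype.card (MulAction.stabilizer N x₀) := by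
        rw [Finset.sum_const, Finset.card_univ, smul_eq_mul]
    _ = Fintype.card (MulAction.orbit N x₀)
          * Fintype.card (MulAction.stabilizer N x₀) := by
        congr 1
        refine Fintype.card_congr (Equiv.subtypeEquivRight ?_)
        intro x
        rw [show qmap N H x = y ↔ qmap N H x = qmap N H x₀ by rw [hx₀],
          qmap_eq_iff N H x x₀]
        exact Iff.rfl
    _ = Fintype.card N := MulAction.card_orbit_mul_card_stabilizer_eq_card_group N x₀


lemma key_count (H : Subgroup G) (g : G) :
    ∑ n : N, Fintype.card {x : G ⧸ H // (g * (n : G)) • x = x}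
      = Fintype.card {y : (G ⧸ N) ⧸ (H.map (QuotientGroup.mk' N)) // (↑g : G ⧸ N) • y = y}
          * Fintype.card N := by
  rw [← Fintype.card_sigma]
  have hu : ∀ p : (Σ n : N, {x : G ⧸ H // (g * (n : G)) • x = x}),
      (↑g : G ⧸ N) • qmap N H p.2.1 = qmap N H p.2.1 := by
    intro p
    have h1 : qmap N H ((g * (p.1 : G)) • p.2.1) = qmap N H p.2.1 := by rw [p.2.2]
    rw [qmap_smul] at h1
    have h2 : ((↑(g * (p.1 : G)) : G ⧸ N)) = (↑g : G ⧸ N) := by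
      have : ((↑(p.1 : G) : G ⧸ N)) = 1 := (QuotientGroup.eq_one_iff _).2 p.1.2
      rw [QuotientGroup.mk_mul, this, mul_one]
    rwa [h2] at h1
  let u : (Σ n : N, {x : G ⧸ H // (g * (n : G)) • x = x}) →
      {y : (G ⧸ N) ⧸ (H.map (QuotientGroup.mk' N)) // (↑g : G ⧸ N) • y = y} :=
    fun p => ⟨qmap N H p.2.1, hu p⟩
  rw [Fintype.card_congr (Equiv.sigmaFiberEquiv u).symm, Fintype.card_sigma]
  have : ∀ y : {y : (G ⧸ N) ⧸ (H.map (QuotientGroup.mk' N)) // (↑g : G ⧸ N) • y = y},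
      Fintype.card {p // u p = y} = Fintype.card N := by
    intro y
    rw [← card_fiber N H g y.1 y.2]
    refine Fintype.card_congr (Equiv.subtypeEquivRight ?_)
    intro p
    rw [Subtype.ext_iff]
  calc ∑ y, Fintype.card {p // u p = y}
      = ∑ _y : {y : (G ⧸ N) ⧸ (H.map (QuotientGroup.mk' N)) // (↑g : G ⧸ N) • y = y},
          Fintype.card N := Finset.sum_congr rfl (fun y _ => this y)
    _ = _ := by rw [Finset.sum_const, Finset.card_univ, smul_eq_mul]

/-- The averaging map sending a character of `G` to the "`N`-fixed points" class function
on `G ⧸ N`. -/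
noncomputable def avgMap : (G → ℂ) →+ ((G ⧸ N) → ℂ) where
  toFun χ := fun q => (Fintype.card N : ℂ)⁻¹ * ∑ n : N, χ (Quotient.out q * (n : G))
  map_zero' := by funext q; simp
  map_add' χ₁ χ₂ := by
    funext q
    simp only [Pi.add_apply]
    rw [Finset.sum_add_distrib, mul_add]


lemma card_N_ne_zero : ((Fintype.card N : ℂ)) ≠ 0 := by
  exact_mod_cast Fintype.card_ne_zero

lemma avg_permChar (H : Subgroup G) :
    avgMap N (permChar H) = permChar (H.map (QuotientGroup.mk' N)) := by
  funext q
  show (Fintype.card N : ℂ)⁻¹ * ∑ n : N, permChar H (Quotient.out q * (n : G)) = _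
  have hg : ((↑(Quotient.out q) : G ⧸ N)) = q := QuotientGroup.out_eq' q
  unfold permChar
  rw [← Nat.cast_sum]
  rw [key_count N H (Quotient.out q)]
  rw [hg]
  push_cast
  rw [← mul_assoc, mul_comm ((Fintype.card N : ℂ))⁻¹, mul_assoc,
    inv_mul_cancel₀ (card_N_ne_zero N), mul_one]

lemma avg_infl (f : G ⧸ N → ℂ) :
    avgMap N (fun g : G => f (QuotientGroup.mk g)) = f := by
  funext q
  show (Fintype.card N : ℂ)⁻¹ * ∑ n : N, f (↑(Quotient.out q * (n : G))) = f q
  have h1 : ∀ n : N, ((↑(Quotient.out q * (n : G)) : G ⧸ N)) = q := by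
    intro n
    rw [QuotientGroup.mk_mul, (QuotientGroup.eq_one_iff _).2 n.2, mul_one,
      QuotientGroup.out_eq']
  calc (Fintype.card N : ℂ)⁻¹ * ∑ n : N, f (↑(Quotient.out q * (n : G)))
      = (Fintype.card N : ℂ)⁻¹ * ∑ _n : N, f q := by
        congr 1; exact Finset.sum_congr rfl (fun n _ => by rw [h1])
    _ = f q := by
        rw [Finset.sum_const, Finset.card_univ, nsmul_eq_mul, ← mul_assoc,
          inv_mul_cancel₀ (card_N_ne_zero N), one_mul]

end Aux

/-- Let `G` be a finite group and `N ⊴ G`.  If `ρ` is a complex representation of `G/N`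
whose inflation to `G` is a virtual permutation representation of `G`, then `ρ` is itself
a virtual permutation representation of `G/N`; i.e. inflation induces an injection
`C(G/N) → C(G)`. -/
theorem inflation_injective_on_C (G : Type) [Group G] [Fintype G] (N : Subgroup G)
    [N.Normal] (f : G ⧸ N → ℂ) (hrep : ∃ V : FDRep ℂ (G ⧸ N), f = V.character)
    (hinfl : (fun g : G => f (QuotientGroup.mk g)) ∈ PermRing G) :
    f ∈ PermRing (G ⧸ N) := by
  have hmem : avgMap N (fun g : G => f (QuotientGroup.mk g)) ∈ (PermRing G).map (avgMap N) :=
    AddSubgroup.mem_map_of_mem _ hinfl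
  have hle : (PermRing G).map (avgMap N) ≤ PermRing (G ⧸ N) := by
    rw [PermRing, AddMonoidHom.map_closure]
    refine AddSubgroup.closure_le _ |>.2 ?_
    rintro _ ⟨χ, ⟨H, rfl⟩, rfl⟩
    exact AddSubgroup.subset_closure ⟨H.map (QuotientGroup.mk' N), avg_permChar N H⟩
  have hf := hle hmem
  rwa [avg_infl] at hf
end

section
/- Let H₁, H₂ be subgroups of a finite group G, and let τᵢ be a complex character of Hᵢ (i = 1,2) with τ₁ rational-valued. Then ⟨Ind_{H₁}^G τ₁, Ind_{H₂}^G τ₂⟩ = (1/(|H₁||H₂|)) · Σ_{[C]} |N_G(C)| φ(|C|) · (Σ_{D₁ ≤ H₁, D₁ ~ C} τ₁(D₁)) · (Σ_{D₂ ≤ H₂, D₂ ~ C} tr*τ₂(D₂)), where the outer sum is over conjugacy classes of cyclic subgroups C of G, Dᵢ ~ C means Dᵢ is G-conjugate to C, τ₁(D₁) denotes the value of τ₁ on any generator of D₁ (well defined by rationality), and tr*τ₂(D₂) is the average value of τ₂ over the generators of D₂. -/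
open scoped BigOperators
open Classical

variable {G : Type} [Group G] [Fintype G]

/-- Inner product of class functions on a finite group. -/
noncomputable def innerChar (f₁ f₂ : G → ℂ) : ℂ :=
  (Fintype.card G : ℂ)⁻¹ * ∑ g : G, f₁ g * (starRingEnd ℂ) (f₂ g)

/-- The character of `G` induced from a character of a subgroup `K`. -/
noncomputable def indChar (K : Subgroup G) (χ : ↥K → ℂ) : G → ℂ :=
  fun g => (Fintype.card K : ℂ)⁻¹ *
    ∑ x : G, if h : x⁻¹ * g * x ∈ K then χ ⟨x⁻¹ * g * x, h⟩ else 0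

/-- Extension of a class function on a subgroup by zero. -/
noncomputable def extendChar (K : Subgroup G) (f : ↥K → ℂ) : G → ℂ :=
  fun g => if h : g ∈ K then f ⟨g, h⟩ else 0

/-- The average value of `f` over the generators of a (cyclic) subgroup `D`: this is
`tr* f (D)`, and for a rational-valued character it equals the common value `f(D)` of `f`
at any generator of `D`. -/
noncomputable def genAvg (f : G → ℂ) (D : Subgroup G) : ℂ :=
  ((Finset.univ.filter (fun x : ↥D => Subgroup.zpowers (x : G) = D)).card : ℂ)⁻¹ *
    ∑ x ∈ Finset.univ.filter (fun x : ↥D => Subgroup.zpowers (x : G) = D), f ↑x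

/-- The conjugate subgroup `g D g⁻¹`. -/
def conjSub (g : G) (D : Subgroup G) : Subgroup G :=
  Subgroup.map (MulAut.conj g).toMonoidHom D

/-- `D` is conjugate to `C` in `G`. -/
def IsConjSub (D C : Subgroup G) : Prop := ∃ g : G, conjSub g C = D


section CharacterLemmas
open Polynomial Module

variable {W : Type*} [AddCommGroup W] [Module ℂ W] [FiniteDimensional ℂ W]

omit [FiniteDimensional ℂ W] in
lemma pow_apply_eigen (f : Module.End ℂ W) {μ : ℂ} {x : W}
    (hx : x ∈ f.eigenspace μ) (k : ℕ) : (f ^ k) x = μ ^ k • x := by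
  have hfx : f x = μ • x := (Module.End.mem_eigenspace_iff).mp hx
  induction k with
  | zero => simp
  | succ m ih =>
    simp [pow_succ', Module.End.mul_apply, ih, map_smul, hfx, smul_smul, mul_comm]

omit [FiniteDimensional ℂ W] in
lemma mapsTo_eigen (f : Module.End ℂ W) (μ : ℂ) (k : ℕ) :
    Set.MapsTo (f ^ k) (f.eigenspace μ) (f.eigenspace μ) := by
  intro x hx
  have h : (f ^ k) x = μ ^ k • x := pow_apply_eigen f hx k
  rw [SetLike.mem_coe, h]
  exact Submodule.smul_mem _ _ hx

lemma trace_pow_eq_sum (f : Module.End ℂ W) {n : ℕ} (hn : n ≠ 0) (hfn : f ^ n = 1) (k : ℕ) :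
    LinearMap.trace ℂ W (f ^ k)
      = ∑ μ ∈ (nthRoots n (1 : ℂ)).toFinset,
          μ ^ k * (finrank ℂ (f.eigenspace μ) : ℂ) := by
  have hnpos : 0 < n := Nat.pos_of_ne_zero hn
  have heig : ∀ μ : ℂ, f.eigenspace μ ≠ ⊥ → μ ^ n = 1 := by
    intro μ hμ
    obtain ⟨x, hx, hx0⟩ := Submodule.exists_mem_ne_zero_of_ne_bot hμ
    have h1 : (f ^ n) x = μ ^ n • x := pow_apply_eigen f hx n
    rw [hfn] at h1
    have hxx : μ ^ n • x = x := by simpa using h1.symm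
    by_contra hne
    have h2 : (μ ^ n - 1) • x = 0 := by rw [sub_smul, one_smul, hxx, sub_self]
    rcases smul_eq_zero.mp h2 with h | h
    · exact hne (by linear_combination h)
    · exact hx0 h
  have hsq : Squarefree (X ^ n - 1 : ℂ[X]) :=
    (Polynomial.X_pow_sub_one_separable_iff.mpr (by exact_mod_cast hn)).squarefree
  have haeval : (aeval f) (X ^ n - 1 : ℂ[X]) = 0 := by simp [hfn]
  have hss : f.IsSemisimple :=
    Module.End.isSemisimple_of_squarefree_aeval_eq_zero hsq haeval
  have htop : ⨆ μ, f.eigenspace μ = ⊤ := by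
    have h1 := Module.End.iSup_maxGenEigenspace_eq_top f
    have h2 : ∀ μ : ℂ, f.maxGenEigenspace μ = f.eigenspace μ := fun μ =>
      (hss.isFinitelySemisimple).maxGenEigenspace_eq_eigenspace μ
    simpa only [h2] using h1
  have hind : iSupIndep f.eigenspace := Module.End.independent_genEigenspace f 1
  have hInt : DirectSum.IsInternal f.eigenspace :=
    DirectSum.isInternal_submodule_of_iSupIndep_of_iSup_eq_top hind htop
  have hfin : {μ : ℂ | f.eigenspace μ ≠ ⊥}.Finite := by
    apply Set.Finite.subset ((nthRoots n (1 : ℂ)).toFinset : Finset ℂ).finite_toSet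
    intro μ hμ
    simpa only [Finset.mem_coe, Multiset.mem_toFinset, mem_nthRoots hnpos] using heig μ hμ
  rw [LinearMap.trace_eq_sum_trace_restrict' hInt hfin (fun μ => mapsTo_eigen f μ k)]
  have hterm : ∀ μ : ℂ,
      LinearMap.trace ℂ (f.eigenspace μ) ((f ^ k).restrict (mapsTo_eigen f μ k))
        = μ ^ k * (finrank ℂ (f.eigenspace μ) : ℂ) := by
    intro μ
    have hres : (f ^ k).restrict (mapsTo_eigen f μ k)
        = (μ ^ k) • (LinearMap.id : f.eigenspace μ →ₗ[ℂ] f.eigenspace μ) := by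
      ext x
      have h := pow_apply_eigen f x.2 k
      simp [LinearMap.restrict_apply]
      exact h
    rw [hres, map_smul, LinearMap.trace_id, smul_eq_mul]
  calc ∑ μ ∈ hfin.toFinset, LinearMap.trace ℂ _ ((f ^ k).restrict (mapsTo_eigen f μ k))
      = ∑ μ ∈ hfin.toFinset, μ ^ k * (finrank ℂ (f.eigenspace μ) : ℂ) :=
        Finset.sum_congr rfl fun μ _ => hterm μ
    _ = ∑ μ ∈ (nthRoots n (1 : ℂ)).toFinset, μ ^ k * (finrank ℂ (f.eigenspace μ) : ℂ) := by
        apply Finset.sum_subset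
        · intro μ hμ
          have h := hfin.mem_toFinset.mp hμ
          simpa only [Multiset.mem_toFinset, mem_nthRoots hnpos] using heig μ h
        · intro μ _ hμ
          have h : f.eigenspace μ = ⊥ := by
            by_contra h; exact hμ (hfin.mem_toFinset.mpr h)
          simp [h]

variable {K : Type} [Group K] [Finite K]

lemma char_pow_eq (V : FDRep ℂ K) (g : K) (k : ℕ) :
    V.character (g ^ k) = ∑ μ ∈ (nthRoots (orderOf g) (1 : ℂ)).toFinset,
      μ ^ k * (finrank ℂ (Module.End.eigenspace (V.ρ g) μ) : ℂ) := by
  have hn : orderOf g ≠ 0 := (orderOf_pos g).ne'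
  have hfn : (V.ρ g : Module.End ℂ V) ^ (orderOf g) = 1 := by
    rw [← map_pow, pow_orderOf_eq_one, map_one]
  have h := trace_pow_eq_sum (V.ρ g : Module.End ℂ V) hn hfn k
  rw [FDRep.character, map_pow]
  exact h

lemma char_rat_const (V : FDRep ℂ K) {g : K} {q : ℚ} (hq : V.character g = (q : ℂ))
    {k : ℕ} (hk : k.Coprime (orderOf g)) : V.character (g ^ k) = V.character g := by
  set n := orderOf g with hn_def
  have hn : n ≠ 0 := (orderOf_pos g).ne'
  have hnpos : 0 < n := Nat.pos_of_ne_zero hn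
  haveI : NeZero n := ⟨hn⟩
  set ζ : ℂ := Complex.exp (2 * Real.pi * Complex.I / n) with hζdef
  have hζ : IsPrimitiveRoot ζ n := Complex.isPrimitiveRoot_exp n hn
  set S := (nthRoots n (1 : ℂ)).toFinset with hS
  set d : ℂ → ℕ := fun μ => finrank ℂ (Module.End.eigenspace (V.ρ g) μ) with hd
  have hex : ∀ μ ∈ S, ∃ i, i < n ∧ ζ ^ i = μ := by
    intro μ hμ
    obtain ⟨i, hi, hζi⟩ := hζ.eq_pow_of_pow_eq_one
      ((mem_nthRoots hnpos).mp (Multiset.mem_toFinset.mp hμ))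
    exact ⟨i, hi, hζi⟩
  set a : ℂ → ℕ := fun μ => if h : ∃ i, i < n ∧ ζ ^ i = μ then h.choose else 0 with ha
  have haspec : ∀ μ ∈ S, ζ ^ (a μ) = μ := by
    intro μ hμ
    have h := hex μ hμ
    simp only [ha, dif_pos h]
    exact h.choose_spec.2
  set P : ℚ[X] := ∑ μ ∈ S, Polynomial.C (d μ : ℚ) * X ^ (a μ) with hP
  have hPeval : ∀ x : ℂ, (aeval x) P = ∑ μ ∈ S, (d μ : ℂ) * x ^ (a μ) := by
    intro x
    simp [hP, map_sum]
  have hchar1 : V.character g = ∑ μ ∈ S, μ * (d μ : ℂ) := by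
    have h := char_pow_eq V g 1
    simpa using h
  have h1 : (aeval ζ) (P - Polynomial.C q) = 0 := by
    rw [map_sub, hPeval, aeval_C]
    have h6 : ∑ μ ∈ S, (d μ : ℂ) * ζ ^ (a μ) = ∑ μ ∈ S, μ * (d μ : ℂ) :=
      Finset.sum_congr rfl fun μ hμ => by rw [haspec μ hμ, mul_comm]
    rw [h6, ← hchar1, hq]
    simp
  have hdvd : minpoly ℚ ζ ∣ (P - Polynomial.C q) := minpoly.dvd ℚ ζ h1
  have hmin : minpoly ℚ ζ = cyclotomic n ℚ := (cyclotomic_eq_minpoly_rat hζ hnpos).symm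
  have hroot : (aeval (ζ ^ k)) (minpoly ℚ ζ) = 0 := by
    rw [hmin]
    have hprim : IsPrimitiveRoot (ζ ^ k) n := hζ.pow_of_coprime k hk
    have h7 : IsRoot (cyclotomic n ℂ) (ζ ^ k) := hprim.isRoot_cyclotomic hnpos
    rw [aeval_def, eval₂_eq_eval_map, map_cyclotomic]
    exact h7
  have h2 : (aeval (ζ ^ k)) (P - Polynomial.C q) = 0 := by
    obtain ⟨r, hr⟩ := hdvd
    rw [hr, map_mul, hroot, zero_mul]
  have h3 : ∑ μ ∈ S, (d μ : ℂ) * μ ^ k = (q : ℂ) := by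
    have h4 := h2
    rw [map_sub, hPeval, aeval_C] at h4
    have h5 : ∑ μ ∈ S, (d μ : ℂ) * (ζ ^ k) ^ (a μ) = ∑ μ ∈ S, (d μ : ℂ) * μ ^ k :=
      Finset.sum_congr rfl fun μ hμ => by
        rw [← pow_mul, mul_comm k (a μ), pow_mul, haspec μ hμ]
    rw [h5] at h4
    have := sub_eq_zero.mp h4
    simpa using this
  rw [char_pow_eq V g k, hq]
  rw [← h3]
  exact Finset.sum_congr rfl fun μ _ => by rw [mul_comm]

lemma char_star (V : FDRep ℂ K) (g : K) :
    (starRingEnd ℂ) (V.character g) = V.character g⁻¹ := by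
  set n := orderOf g with hn_def
  have hn : n ≠ 0 := (orderOf_pos g).ne'
  have hn1 : 1 ≤ n := Nat.one_le_iff_ne_zero.mpr hn
  have hginv : g⁻¹ = g ^ (n - 1) := by
    have h : g ^ (n - 1) * g = 1 := by
      rw [← pow_succ, Nat.sub_add_cancel hn1, hn_def, pow_orderOf_eq_one]
    exact inv_eq_of_mul_eq_one_left h
  have hchar1 : V.character g = V.character (g ^ 1) := by rw [pow_one]
  rw [hchar1, char_pow_eq V g 1, hginv, char_pow_eq V g (n - 1)]
  rw [map_sum]
  apply Finset.sum_congr rfl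
  intro μ hμ
  have hμn : μ ^ n = 1 := (mem_nthRoots (Nat.pos_of_ne_zero hn)).mp (Multiset.mem_toFinset.mp hμ)
  have hnorm : ‖μ‖ = 1 := Complex.norm_eq_one_of_pow_eq_one hμn hn
  have hstar : (starRingEnd ℂ) μ = μ ^ (n - 1) := by
    have h1 : μ⁻¹ = (starRingEnd ℂ) μ := RCLike.inv_eq_conj hnorm
    have h2 : μ ^ (n - 1) * μ = 1 := by rw [← pow_succ, Nat.sub_add_cancel hn1, hμn]
    rw [← h1, (inv_eq_of_mul_eq_one_left h2)]
  rw [map_mul, pow_one, hstar]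
  congr 1
  simp

end CharacterLemmas
section Aux
set_option linter.unusedSectionVars false


lemma mem_conjSub {g y : G} {D : Subgroup G} : y ∈ conjSub g D ↔ g⁻¹ * y * g ∈ D := by
  constructor
  · rintro ⟨x, hx, rfl⟩
    simpa [MulAut.conj_apply, mul_assoc] using hx
  · intro h
    refine ⟨g⁻¹ * y * g, h, ?_⟩
    simp [MulAut.conj_apply]
    group

lemma conjSub_conjSub (g h : G) (D : Subgroup G) :
    conjSub g (conjSub h D) = conjSub (g * h) D := by
  ext y
  have hy : (g * h)⁻¹ * y * (g * h) = h⁻¹ * (g⁻¹ * y * g) * h := by group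
  rw [mem_conjSub, mem_conjSub, mem_conjSub, hy]

lemma conjSub_one (D : Subgroup G) : conjSub (1 : G) D = D := by
  ext y; rw [mem_conjSub]; simp

lemma IsConjSub.refl (D : Subgroup G) : IsConjSub D D := ⟨1, conjSub_one D⟩

lemma isConjSub_of_conj (g : G) (D : Subgroup G) : IsConjSub (conjSub g D) D := ⟨g, rfl⟩

lemma zpowers_conj (g x : G) :
    Subgroup.zpowers (g * x * g⁻¹) = conjSub g (Subgroup.zpowers x) := by
  ext y
  rw [mem_conjSub, Subgroup.mem_zpowers_iff, Subgroup.mem_zpowers_iff]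
  constructor
  · rintro ⟨k, rfl⟩
    exact ⟨k, by rw [conj_zpow]; group⟩
  · rintro ⟨k, hk⟩
    refine ⟨k, ?_⟩
    rw [conj_zpow, hk]
    group

lemma conjSub_eq_self_iff {g : G} {D : Subgroup G} :
    conjSub g D = D ↔ g ∈ Subgroup.normalizer (D : Set G) := by
  rw [Subgroup.mem_normalizer_iff]
  constructor
  · intro h x
    have h2 : g⁻¹ * (g * x * g⁻¹) * g = x := by group
    conv_rhs => rw [← h]
    rw [mem_conjSub, h2]
  · intro h
    ext y
    rw [mem_conjSub]
    have := (h (g⁻¹ * y * g)).symm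
    have h2 : g * (g⁻¹ * y * g) * g⁻¹ = y := by group
    rw [h2] at this
    exact this.symm

/-- conj equiv as subgroups -/
noncomputable def conjSubEquiv (g : G) (D : Subgroup G) : ↥D ≃* ↥(conjSub g D) :=
  Subgroup.equivMapOfInjective D (MulAut.conj g).toMonoidHom (MulAut.conj g).injective

lemma natCard_conjSub (g : G) (D : Subgroup G) : Nat.card (conjSub g D) = Nat.card D :=
  (Nat.card_congr (conjSubEquiv g D).toEquiv).symm

lemma isCyclic_conjSub (g : G) (D : Subgroup G) [IsCyclic ↥D] : IsCyclic ↥(conjSub g D) :=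
  isCyclic_of_surjective (conjSubEquiv g D) (conjSubEquiv g D).surjective

lemma IsConjSub.natCard {D C : Subgroup G} (h : IsConjSub D C) : Nat.card D = Nat.card C := by
  obtain ⟨g, rfl⟩ := h; exact natCard_conjSub g C

lemma IsConjSub.isCyclic {D C : Subgroup G} (h : IsConjSub D C) (hC : IsCyclic ↥C) :
    IsCyclic ↥D := by
  obtain ⟨g, rfl⟩ := h; exact @isCyclic_conjSub G _ _ g C hC

lemma isCyclic_zpowers (g : G) : IsCyclic ↥(Subgroup.zpowers g) := by
  refine ⟨⟨⟨g, Subgroup.mem_zpowers g⟩, fun x => ?_⟩⟩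
  obtain ⟨k, hk⟩ := Subgroup.mem_zpowers_iff.mp x.2
  exact ⟨k, Subtype.ext (by rw [← hk, SubgroupClass.coe_zpow])⟩

/-- generators of a subgroup, as a finset of `G`. -/
noncomputable def gens (D : Subgroup G) : Finset G :=
  Finset.univ.filter (fun v : G => Subgroup.zpowers v = D)

lemma mem_gens {v : G} {D : Subgroup G} : v ∈ gens D ↔ Subgroup.zpowers v = D := by
  simp [gens]

lemma mem_of_mem_gens {v : G} {D : Subgroup G} (h : v ∈ gens D) : v ∈ D :=
  (mem_gens.mp h) ▸ Subgroup.mem_zpowers v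

lemma genAvg_eq (f : G → ℂ) (D : Subgroup G) :
    genAvg f D = ((gens D).card : ℂ)⁻¹ * ∑ v ∈ gens D, f v := by
  have hsum : ∑ x ∈ Finset.univ.filter (fun x : ↥D => Subgroup.zpowers (x : G) = D), f ↑x
      = ∑ v ∈ gens D, f v := by
    apply Finset.sum_bij (fun (x : ↥D) _ => (x : G))
    · intro x hx
      rw [mem_gens]
      exact (Finset.mem_filter.mp hx).2
    · intro x _ y _ h
      exact Subtype.ext h
    · intro v hv
      refine ⟨⟨v, mem_of_mem_gens hv⟩, Finset.mem_filter.mpr ⟨Finset.mem_univ _, mem_gens.mp hv⟩, rfl⟩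
    · intro x _; rfl
  have hcard : (Finset.univ.filter (fun x : ↥D => Subgroup.zpowers (x : G) = D)).card
      = (gens D).card := by
    apply Finset.card_bij (fun (x : ↥D) _ => (x : G))
    · intro x hx
      rw [mem_gens]
      exact (Finset.mem_filter.mp hx).2
    · intro x _ y _ h
      exact Subtype.ext h
    · intro v hv
      exact ⟨⟨v, mem_of_mem_gens hv⟩, Finset.mem_filter.mpr ⟨Finset.mem_univ _, mem_gens.mp hv⟩, rfl⟩
  rw [genAvg, hsum, hcard]

lemma gens_nonempty {D : Subgroup G} (hD : IsCyclic ↥D) : (gens D).Nonempty := by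
  obtain ⟨x, hx⟩ := hD.exists_generator
  refine ⟨(x : G), mem_gens.mpr ?_⟩
  apply le_antisymm (Subgroup.zpowers_le.mpr x.2)
  intro y hy
  obtain ⟨k, hk⟩ := Subgroup.mem_zpowers_iff.mp (hx ⟨y, hy⟩)
  exact Subgroup.mem_zpowers_iff.mpr ⟨k, by rw [← SubgroupClass.coe_zpow, hk]⟩

lemma card_gens {D : Subgroup G} (hD : IsCyclic ↥D) :
    (gens D).card = Nat.totient (Nat.card D) := by
  have hiff : ∀ x : ↥D, Subgroup.zpowers (x : G) = D ↔ orderOf x = Fintype.card ↥D := by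
    intro x
    constructor
    · intro h
      rw [← Subgroup.orderOf_coe, ← Nat.card_zpowers, h, Nat.card_eq_fintype_card]
    · intro h
      apply Subgroup.eq_of_le_of_card_ge (Subgroup.zpowers_le.mpr x.2)
      rw [Nat.card_zpowers, Subgroup.orderOf_coe, h, Nat.card_eq_fintype_card]
  have hcard : (gens D).card
      = (Finset.univ.filter (fun x : ↥D => Subgroup.zpowers (x : G) = D)).card := by
    apply (Finset.card_bij (fun (x : ↥D) _ => (x : G)) ?_ ?_ ?_).symm
    · intro x hx
      rw [mem_gens]
      exact (Finset.mem_filter.mp hx).2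
    · intro x _ y _ h
      exact Subtype.ext h
    · intro v hv
      exact ⟨⟨v, mem_of_mem_gens hv⟩, Finset.mem_filter.mpr ⟨Finset.mem_univ _, mem_gens.mp hv⟩, rfl⟩
  rw [hcard]
  have : (Finset.univ.filter (fun x : ↥D => Subgroup.zpowers (x : G) = D))
      = (Finset.univ.filter (fun x : ↥D => orderOf x = Fintype.card ↥D)) := by
    apply Finset.filter_congr
    intro x _
    simp only [hiff x]
  rw [this, IsCyclic.card_orderOf_eq_totient (dvd_refl _), Nat.card_eq_fintype_card]

lemma sum_gens_eq (f : G → ℂ) (D : Subgroup G) :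
    ∑ v ∈ gens D, f v = ((gens D).card : ℂ) * genAvg f D := by
  rw [genAvg_eq]
  rcases eq_or_ne ((gens D).card) 0 with h | h
  · rw [Finset.card_eq_zero.mp h]
    simp
  · rw [← mul_assoc, mul_inv_cancel₀ (Nat.cast_ne_zero.mpr h), one_mul]

lemma extendChar_apply_mem {K : Subgroup G} (τ : ↥K → ℂ) {v : G} (h : v ∈ K) :
    extendChar K τ v = τ ⟨v, h⟩ := by
  simp only [extendChar]
  rw [dif_pos h]

lemma extendChar_apply_not_mem {K : Subgroup G} (τ : ↥K → ℂ) {v : G} (h : ¬ v ∈ K) :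
    extendChar K τ v = 0 := by simp [extendChar, h]

lemma genAvg_eq_zero_of_not_le {K : Subgroup G} (τ : ↥K → ℂ) {D : Subgroup G} (h : ¬ D ≤ K) :
    genAvg (extendChar K τ) D = 0 := by
  rw [genAvg_eq]
  have : ∀ v ∈ gens D, extendChar K τ v = 0 := by
    intro v hv
    apply extendChar_apply_not_mem
    intro hvK
    exact h ((mem_gens.mp hv) ▸ Subgroup.zpowers_le.mpr hvK)
  rw [Finset.sum_congr rfl this]
  simp

lemma sum_gens_conj (f : G → ℂ) (g : G) (D : Subgroup G) :
    ∑ v ∈ gens (conjSub g D), f v = ∑ u ∈ gens D, f (g * u * g⁻¹) := by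
  apply (Finset.sum_bij (fun (u : G) _ => g * u * g⁻¹) ?_ ?_ ?_ ?_).symm
  · intro u hu
    rw [mem_gens, zpowers_conj, mem_gens.mp hu]
  · intro x _ y _ h
    exact mul_left_cancel (mul_right_cancel h)
  · intro v hv
    refine ⟨g⁻¹ * v * g, ?_, by group⟩
    rw [mem_gens]
    have : Subgroup.zpowers (g⁻¹ * v * (g⁻¹)⁻¹) = conjSub g⁻¹ (Subgroup.zpowers v) :=
      zpowers_conj g⁻¹ v
    rw [inv_inv] at this
    rw [this, mem_gens.mp hv, conjSub_conjSub, inv_mul_cancel, conjSub_one]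
  · intro x _; rfl

lemma card_conj_transporter {C D₁ D₂ : Subgroup G} (h1 : IsConjSub D₁ C) (h2 : IsConjSub D₂ C) :
    (Finset.univ.filter (fun z : G => conjSub z⁻¹ D₁ = D₂)).card = Nat.card (Subgroup.normalizer (C : Set G)) := by
  obtain ⟨a, ha⟩ := h1
  obtain ⟨b, hb⟩ := h2
  have hiff : ∀ z : G, conjSub z⁻¹ D₁ = D₂ ↔ b⁻¹ * z⁻¹ * a ∈ Subgroup.normalizer (C : Set G) := by
    intro z
    rw [← conjSub_eq_self_iff]
    constructor
    · intro h
      have : conjSub b⁻¹ (conjSub (z⁻¹ * a) C) = conjSub b⁻¹ D₂ := by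
        rw [← conjSub_conjSub, ha, h]
      rw [conjSub_conjSub, ← hb, conjSub_conjSub, inv_mul_cancel, conjSub_one] at this
      rw [← mul_assoc] at this
      exact this
    · intro h
      have : conjSub b (conjSub (b⁻¹ * z⁻¹ * a) C) = conjSub b C := by rw [h]
      rw [conjSub_conjSub, hb] at this
      have h2 : b * (b⁻¹ * z⁻¹ * a) = z⁻¹ * a := by group
      rw [h2, ← conjSub_conjSub, ha] at this
      exact this
  rw [Nat.card_eq_fintype_card]
  apply Finset.card_bij
    (fun (z : G) (hz : z ∈ Finset.univ.filter (fun z : G => conjSub z⁻¹ D₁ = D₂)) =>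
      (⟨b⁻¹ * z⁻¹ * a, (hiff z).mp (Finset.mem_filter.mp hz).2⟩ : ↥(Subgroup.normalizer (C : Set G))))
  · intros; exact Finset.mem_univ _
  · intro x hx y hy h
    have := congrArg (Subtype.val) h
    simp only at this
    have h1 : b⁻¹ * x⁻¹ = b⁻¹ * y⁻¹ := mul_right_cancel this
    exact inv_injective (mul_left_cancel h1)
  · intro w _
    refine ⟨a * (w : G)⁻¹ * b⁻¹, Finset.mem_filter.mpr ⟨Finset.mem_univ _, (hiff _).mpr ?_⟩, ?_⟩
    · have : (a * (w : G)⁻¹ * b⁻¹)⁻¹ = b * w * a⁻¹ := by group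
      rw [this]
      have h3 : b⁻¹ * (b * (w : G) * a⁻¹) * a = w := by group
      rw [h3]
      exact w.2
    · apply Subtype.ext
      simp only
      group


lemma extendChar_const {K : Subgroup G} (τ : ↥K → ℂ) (V : FDRep ℂ ↥K) (hV : τ = V.character)
    (hQ : ∀ x, ∃ q : ℚ, τ x = (q : ℂ)) {D : Subgroup G} (hD : D ≤ K) {u v : G}
    (hu : u ∈ gens D) (hv : v ∈ gens D) : extendChar K τ v = extendChar K τ u := by
  have huK : u ∈ K := hD (mem_of_mem_gens hu)
  have hvK : v ∈ K := hD (mem_of_mem_gens hv)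
  rw [extendChar_apply_mem τ huK, extendChar_apply_mem τ hvK]
  have hvD : v ∈ Subgroup.zpowers u := by rw [mem_gens.mp hu]; exact mem_of_mem_gens hv
  obtain ⟨k, hk⟩ := (Submonoid.mem_powers_iff v u).mp ((mem_powers_iff_mem_zpowers).mpr hvD)
  have hord : orderOf u = Nat.card D := by rw [← Nat.card_zpowers, mem_gens.mp hu]
  have hordv : orderOf v = Nat.card D := by rw [← Nat.card_zpowers, mem_gens.mp hv]
  have hne : orderOf u ≠ 0 := (orderOf_pos u).ne'
  have hcop : Nat.gcd (orderOf u) k = 1 := by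
    have h1 : orderOf (u ^ k) = orderOf u := by rw [hk, hordv, hord]
    rw [orderOf_pow] at h1
    rcases Nat.div_eq_self.mp h1 with h | h
    · exact absurd h hne
    · exact h
  have hut : orderOf (⟨u, huK⟩ : ↥K) = orderOf u := Subgroup.orderOf_mk u huK
  have hvt : (⟨v, hvK⟩ : ↥K) = (⟨u, huK⟩ : ↥K) ^ k := by
    apply Subtype.ext
    rw [SubmonoidClass.coe_pow]
    exact hk.symm
  obtain ⟨q, hq⟩ := hQ ⟨u, huK⟩
  have hcop' : k.Coprime (orderOf (⟨u, huK⟩ : ↥K)) := by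
    rw [hut]
    exact Nat.coprime_comm.mp hcop
  rw [hvt, hV]
  exact char_rat_const V (hV ▸ hq) hcop'

lemma extendChar_eq_genAvg {K : Subgroup G} (τ : ↥K → ℂ) (V : FDRep ℂ ↥K) (hV : τ = V.character)
    (hQ : ∀ x, ∃ q : ℚ, τ x = (q : ℂ)) {D : Subgroup G} (hD : D ≤ K) {u : G}
    (hu : u ∈ gens D) : extendChar K τ u = genAvg (extendChar K τ) D := by
  rw [genAvg_eq]
  have hconst : ∀ v ∈ gens D, extendChar K τ v = extendChar K τ u := fun v hv =>
    extendChar_const τ V hV hQ hD hu hv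
  rw [Finset.sum_congr rfl hconst, Finset.sum_const, nsmul_eq_mul]
  have hne : ((gens D).card : ℂ) ≠ 0 := Nat.cast_ne_zero.mpr (Finset.card_ne_zero_of_mem hu)
  rw [← mul_assoc, inv_mul_cancel₀ hne, one_mul]

lemma genAvg_star {K : Subgroup G} (τ : ↥K → ℂ) (V : FDRep ℂ ↥K) (hV : τ = V.character)
    (D : Subgroup G) :
    (starRingEnd ℂ) (genAvg (extendChar K τ) D) = genAvg (extendChar K τ) D := by
  rw [genAvg_eq, map_mul, map_inv₀, map_natCast]
  congr 1
  rw [map_sum]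
  have hstep : ∀ v ∈ gens D, (starRingEnd ℂ) (extendChar K τ v) = extendChar K τ v⁻¹ := by
    intro v _
    by_cases h : v ∈ K
    · rw [extendChar_apply_mem τ h, extendChar_apply_mem τ (inv_mem h), hV]
      have h2 : (⟨v⁻¹, inv_mem h⟩ : ↥K) = (⟨v, h⟩ : ↥K)⁻¹ := rfl
      rw [h2]
      exact char_star V ⟨v, h⟩
    · rw [extendChar_apply_not_mem τ h, extendChar_apply_not_mem τ
        (fun h' => h (by simpa using inv_mem h')), map_zero]
  rw [Finset.sum_congr rfl hstep]
  apply Finset.sum_bij (fun (v : G) _ => v⁻¹)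
  · intro v hv
    rw [mem_gens, Subgroup.zpowers_inv, mem_gens.mp hv]
  · intro x _ y _ h
    exact inv_injective h
  · intro w hw
    exact ⟨w⁻¹, by rw [mem_gens, Subgroup.zpowers_inv, mem_gens.mp hw], inv_inv w⟩
  · intro x _; rfl

end Aux

/-- **The induction inner product formula.**  Let `H₁, H₂ ≤ G`, `τᵢ` a complex character
of `Hᵢ` with `τ₁` rational-valued, and `T` a set of representatives of the conjugacy
classes of cyclic subgroups of `G`.  Then
`⟨Ind τ₁, Ind τ₂⟩ = (|H₁||H₂|)⁻¹ Σ_{[C]} |N_G(C)| φ(|C|) (Σ_{D₁≤H₁, D₁~C} τ₁(D₁))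
(Σ_{D₂≤H₂, D₂~C} tr*τ₂(D₂))`, where `τ₁(D₁)` (the value of `τ₁` at any generator of
`D₁`, well defined by rationality) is expressed as the average of `τ₁` over the
generators of `D₁`. -/
theorem inner_product_of_induced_characters
    (H₁ H₂ : Subgroup G) (τ₁ : ↥H₁ → ℂ) (τ₂ : ↥H₂ → ℂ)
    (hτ₁ : ∃ V : FDRep ℂ ↥H₁, τ₁ = V.character)
    (hτ₁Q : ∀ x, ∃ q : ℚ, τ₁ x = (q : ℂ))
    (hτ₂ : ∃ V : FDRep ℂ ↥H₂, τ₂ = V.character)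
    (T : Finset (Subgroup G)) (hTcyc : ∀ D ∈ T, IsCyclic D)
    (hTrep : ∀ C : Subgroup G, IsCyclic C → ∃! D, D ∈ T ∧ IsConjSub C D) :
    innerChar (indChar H₁ τ₁) (indChar H₂ τ₂) =
      ((Fintype.card H₁ : ℂ) * (Fintype.card H₂ : ℂ))⁻¹ *
        ∑ Cs ∈ T, (Nat.card (Subgroup.normalizer (Cs : Set G)) : ℂ) * (Nat.totient (Nat.card Cs) : ℂ) *
          (∑ᶠ D₁ ∈ {D : Subgroup G | D ≤ H₁ ∧ IsConjSub D Cs},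
            genAvg (extendChar H₁ τ₁) D₁) *
          (∑ᶠ D₂ ∈ {D : Subgroup G | D ≤ H₂ ∧ IsConjSub D Cs},
            genAvg (extendChar H₂ τ₂) D₂) := by
  classical
  obtain ⟨V₁, hV₁⟩ := hτ₁
  obtain ⟨V₂, hV₂⟩ := hτ₂
  haveI hsubfin : Finite (Subgroup G) :=
    Finite.of_injective (fun H : Subgroup G => (H : Set G)) SetLike.coe_injective
  haveI : Fintype (Subgroup G) := Fintype.ofFinite _
  have hc1 : (Fintype.card H₁ : ℂ) ≠ 0 := Nat.cast_ne_zero.mpr Fintype.card_ne_zero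
  have hc2 : (Fintype.card H₂ : ℂ) ≠ 0 := Nat.cast_ne_zero.mpr Fintype.card_ne_zero
  have hcG : (Fintype.card G : ℂ) ≠ 0 := Nat.cast_ne_zero.mpr Fintype.card_ne_zero
  set e₁ : G → ℂ := extendChar H₁ τ₁ with he₁
  set e₂ : G → ℂ := extendChar H₂ τ₂ with he₂
  set F : G → G → ℂ := fun u z => e₁ u * (starRingEnd ℂ) (e₂ (z⁻¹ * u * z)) with hF
  -- localized helper facts
  have hstar₂ : ∀ D : Subgroup G, (starRingEnd ℂ) (genAvg e₂ D) = genAvg e₂ D := by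
    intro D; rw [he₂]; exact genAvg_star τ₂ V₂ hV₂ D
  have hzero₁ : ∀ D : Subgroup G, ¬ D ≤ H₁ → genAvg e₁ D = 0 := by
    intro D hD; rw [he₁]; exact genAvg_eq_zero_of_not_le τ₁ hD
  have hzero₂ : ∀ D : Subgroup G, ¬ D ≤ H₂ → genAvg e₂ D = 0 := by
    intro D hD; rw [he₂]; exact genAvg_eq_zero_of_not_le τ₂ hD
  have hconstavg : ∀ (D : Subgroup G), D ≤ H₁ → ∀ u ∈ gens D, e₁ u = genAvg e₁ D := by
    intro D hD u hu; rw [he₁]; exact extendChar_eq_genAvg τ₁ V₁ hV₁ hτ₁Q hD hu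
  have he₁0 : ∀ u : G, u ∉ H₁ → e₁ u = 0 := by
    intro u hu; rw [he₁]; exact extendChar_apply_not_mem τ₁ hu
  -- Step 1
  have hind : ∀ (K : Subgroup G) (τ : ↥K → ℂ) (g : G),
      indChar K τ g = (Fintype.card K : ℂ)⁻¹ * ∑ x : G, extendChar K τ (x⁻¹ * g * x) := by
    intro K τ g
    simp only [indChar, extendChar]
  have expand : ∀ g : G, indChar H₁ τ₁ g * (starRingEnd ℂ) (indChar H₂ τ₂ g)
      = ((Fintype.card H₁ : ℂ)⁻¹ * (Fintype.card H₂ : ℂ)⁻¹) *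
        ∑ x : G, ∑ y : G, e₁ (x⁻¹ * g * x) * (starRingEnd ℂ) (e₂ (y⁻¹ * g * y)) := by
    intro g
    rw [hind, hind, map_mul, map_inv₀, map_natCast, map_sum, mul_mul_mul_comm,
      Finset.sum_mul_sum]
  have inner_eq : ∀ x : G,
      (∑ g : G, ∑ y : G, e₁ (x⁻¹ * g * x) * (starRingEnd ℂ) (e₂ (y⁻¹ * g * y)))
      = ∑ u : G, ∑ z : G, F u z := by
    intro x
    refine (Fintype.sum_equiv ((Equiv.mulLeft x).trans (Equiv.mulRight x⁻¹))
      (fun u => ∑ z : G, F u z)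
      (fun g => ∑ y : G, e₁ (x⁻¹ * g * x) * (starRingEnd ℂ) (e₂ (y⁻¹ * g * y))) ?_).symm
    intro u
    show (∑ z : G, F u z)
      = ∑ y : G, e₁ (x⁻¹ * (x * u * x⁻¹) * x) * (starRingEnd ℂ) (e₂ (y⁻¹ * (x * u * x⁻¹) * y))
    have h1 : x⁻¹ * (x * u * x⁻¹) * x = u := by group
    rw [h1]
    refine Fintype.sum_equiv (Equiv.mulLeft x) _ _ ?_
    intro z
    show F u z = e₁ u * (starRingEnd ℂ) (e₂ ((x * z)⁻¹ * (x * u * x⁻¹) * (x * z)))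
    have h2 : (x * z)⁻¹ * (x * u * x⁻¹) * (x * z) = z⁻¹ * u * z := by group
    rw [h2, hF]
  have step1 : innerChar (indChar H₁ τ₁) (indChar H₂ τ₂)
      = ((Fintype.card H₁ : ℂ) * (Fintype.card H₂ : ℂ))⁻¹ * ∑ u : G, ∑ z : G, F u z := by
    unfold innerChar
    rw [Finset.sum_congr rfl (fun g _ => expand g), ← Finset.mul_sum]
    rw [show (∑ g : G, ∑ x : G, ∑ y : G,
          e₁ (x⁻¹ * g * x) * (starRingEnd ℂ) (e₂ (y⁻¹ * g * y)))
        = ∑ x : G, ∑ g : G, ∑ y : G,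
          e₁ (x⁻¹ * g * x) * (starRingEnd ℂ) (e₂ (y⁻¹ * g * y)) from Finset.sum_comm]
    rw [Finset.sum_congr rfl (fun x _ => inner_eq x), Finset.sum_const, nsmul_eq_mul,
      Finset.card_univ]
    field_simp
  -- Step 2
  have hcycZ : ∀ u : G, IsCyclic ↥(Subgroup.zpowers u) := fun u => isCyclic_zpowers u
  set Φ : G → Subgroup G := fun u => (hTrep (Subgroup.zpowers u) (hcycZ u)).exists.choose
    with hΦdef
  have hΦspec : ∀ u : G, Φ u ∈ T ∧ IsConjSub (Subgroup.zpowers u) (Φ u) := fun u =>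
    (hTrep (Subgroup.zpowers u) (hcycZ u)).exists.choose_spec
  have hΦunique : ∀ (u : G) (C : Subgroup G), C ∈ T → IsConjSub (Subgroup.zpowers u) C →
      Φ u = C := by
    intro u C hC hconj
    exact ((hTrep (Subgroup.zpowers u) (hcycZ u)).unique (hΦspec u) ⟨hC, hconj⟩)
  have step2 : ∑ u : G, ∑ z : G, F u z
      = ∑ C ∈ T, ∑ u ∈ Finset.univ.filter (fun u : G => IsConjSub (Subgroup.zpowers u) C),
          ∑ z : G, F u z := by
    rw [← Finset.sum_fiberwise_of_maps_to (t := T) (g := Φ) (fun u _ => (hΦspec u).1)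
      (fun u => ∑ z : G, F u z)]
    apply Finset.sum_congr rfl
    intro C hC
    have hsets : Finset.univ.filter (fun u : G => Φ u = C)
        = Finset.univ.filter (fun u : G => IsConjSub (Subgroup.zpowers u) C) := by
      ext u
      simp only [Finset.mem_filter, Finset.mem_univ, true_and]
      constructor
      · rintro rfl; exact (hΦspec u).2
      · intro h; exact hΦunique u C hC h
    rw [hsets]
  -- Step 3
  have step3 : ∀ C ∈ T,
      (∑ u ∈ Finset.univ.filter (fun u : G => IsConjSub (Subgroup.zpowers u) C),
          ∑ z : G, F u z)
      = (Nat.card (Subgroup.normalizer (C : Set G)) : ℂ) * (Nat.totient (Nat.card C) : ℂ) *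
        (∑ D₁ ∈ Finset.univ.filter (fun D : Subgroup G => IsConjSub D C), genAvg e₁ D₁) *
        (∑ D₂ ∈ Finset.univ.filter (fun D : Subgroup G => IsConjSub D C), genAvg e₂ D₂) := by
    intro C hC
    have hCcyc : IsCyclic ↥C := hTcyc C hC
    rw [← Finset.sum_fiberwise_of_maps_to
      (t := Finset.univ.filter (fun D : Subgroup G => IsConjSub D C))
      (g := fun u : G => Subgroup.zpowers u)
      (fun u hu => by
        simp only [Finset.mem_filter, Finset.mem_univ, true_and] at hu ⊢
        exact hu)
      (fun u => ∑ z : G, F u z)]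
    have hfib : ∀ D₁ ∈ Finset.univ.filter (fun D : Subgroup G => IsConjSub D C),
        (Finset.univ.filter (fun u : G => IsConjSub (Subgroup.zpowers u) C)).filter
          (fun u => Subgroup.zpowers u = D₁) = gens D₁ := by
      intro D₁ hD₁
      have hD₁C : IsConjSub D₁ C := (Finset.mem_filter.mp hD₁).2
      ext u
      simp only [Finset.mem_filter, Finset.mem_univ, true_and, mem_gens]
      constructor
      · rintro ⟨_, h⟩; exact h
      · intro h; exact ⟨h ▸ hD₁C, h⟩
    have key : ∀ D₁ ∈ Finset.univ.filter (fun D : Subgroup G => IsConjSub D C),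
        (∑ u ∈ gens D₁, ∑ z : G, F u z)
        = genAvg e₁ D₁ * ((Nat.card (Subgroup.normalizer (C : Set G)) : ℂ) * (Nat.totient (Nat.card C) : ℂ) *
            ∑ D₂ ∈ Finset.univ.filter (fun D : Subgroup G => IsConjSub D C), genAvg e₂ D₂) := by
      intro D₁ hD₁m
      have hD₁C : IsConjSub D₁ C := (Finset.mem_filter.mp hD₁m).2
      by_cases hle : D₁ ≤ H₁
      · -- main case
        have hzsum : ∀ z : G, (∑ u ∈ gens D₁, F u z)
            = genAvg e₁ D₁ * ((Nat.totient (Nat.card C) : ℂ) * genAvg e₂ (conjSub z⁻¹ D₁)) := by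
          intro z
          have h1 : ∑ u ∈ gens D₁, F u z
              = genAvg e₁ D₁ * ∑ u ∈ gens D₁, (starRingEnd ℂ) (e₂ (z⁻¹ * u * z)) := by
            rw [Finset.mul_sum]
            apply Finset.sum_congr rfl
            intro u hu
            simp only [hF]
            rw [hconstavg D₁ hle u hu]
          rw [h1]
          congr 1
          have h2 : ∑ u ∈ gens D₁, (starRingEnd ℂ) (e₂ (z⁻¹ * u * z))
              = ∑ v ∈ gens (conjSub z⁻¹ D₁), (starRingEnd ℂ) (e₂ v) := by
            rw [sum_gens_conj (fun v => (starRingEnd ℂ) (e₂ v)) z⁻¹ D₁]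
            apply Finset.sum_congr rfl
            intro u _
            rw [inv_inv]
          have hconjC : IsConjSub (conjSub z⁻¹ D₁) C := by
            obtain ⟨a, ha⟩ := hD₁C
            exact ⟨z⁻¹ * a, by rw [← conjSub_conjSub, ha]⟩
          have hcyc2 : IsCyclic ↥(conjSub z⁻¹ D₁) := hconjC.isCyclic hCcyc
          have hcard2 : ((gens (conjSub z⁻¹ D₁)).card : ℂ)
              = (Nat.totient (Nat.card C) : ℂ) := by
            rw [card_gens hcyc2, hconjC.natCard]
          rw [h2, ← map_sum, sum_gens_eq e₂ (conjSub z⁻¹ D₁), map_mul, map_natCast,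
            hstar₂, ← hcard2]
        calc (∑ u ∈ gens D₁, ∑ z : G, F u z)
            = ∑ z : G, ∑ u ∈ gens D₁, F u z := Finset.sum_comm
          _ = ∑ z : G, genAvg e₁ D₁ *
                ((Nat.totient (Nat.card C) : ℂ) * genAvg e₂ (conjSub z⁻¹ D₁)) :=
              Finset.sum_congr rfl fun z _ => hzsum z
          _ = genAvg e₁ D₁ * ((Nat.totient (Nat.card C) : ℂ) *
                ∑ z : G, genAvg e₂ (conjSub z⁻¹ D₁)) := by
              rw [← Finset.mul_sum, ← Finset.mul_sum]
          _ = genAvg e₁ D₁ * ((Nat.card (Subgroup.normalizer (C : Set G)) : ℂ) * (Nat.totient (Nat.card C) : ℂ) *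
                ∑ D₂ ∈ Finset.univ.filter (fun D : Subgroup G => IsConjSub D C),
                  genAvg e₂ D₂) := by
              have h3 : ∑ z : G, genAvg e₂ (conjSub z⁻¹ D₁)
                  = ∑ D₂ ∈ Finset.univ.filter (fun D : Subgroup G => IsConjSub D C),
                      (Nat.card (Subgroup.normalizer (C : Set G)) : ℂ) * genAvg e₂ D₂ := by
                rw [← Finset.sum_fiberwise_of_maps_to
                  (t := Finset.univ.filter (fun D : Subgroup G => IsConjSub D C))
                  (g := fun z : G => conjSub z⁻¹ D₁)
                  (fun z _ => by
                    simp only [Finset.mem_filter, Finset.mem_univ, true_and]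
                    obtain ⟨a, ha⟩ := hD₁C
                    exact ⟨z⁻¹ * a, by rw [← conjSub_conjSub, ha]⟩)
                  (fun z => genAvg e₂ (conjSub z⁻¹ D₁))]
                apply Finset.sum_congr rfl
                intro D₂ hD₂m
                have hD₂C : IsConjSub D₂ C := (Finset.mem_filter.mp hD₂m).2
                rw [Finset.sum_congr rfl (fun z hz => by
                  rw [(Finset.mem_filter.mp hz).2])]
                rw [Finset.sum_const, nsmul_eq_mul, card_conj_transporter hD₁C hD₂C]
              rw [h3, ← Finset.mul_sum]
              ring
      · -- degenerate case
        rw [hzero₁ D₁ hle, zero_mul]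
        apply Finset.sum_eq_zero
        intro u hu
        apply Finset.sum_eq_zero
        intro z _
        have h0 : e₁ u = 0 := he₁0 u (fun huH => hle ((mem_gens.mp hu) ▸
          Subgroup.zpowers_le.mpr huH))
        simp only [hF]
        rw [h0, zero_mul]
    rw [Finset.sum_congr (Finset.ext fun D₁ => Iff.rfl) (fun D₁ hD₁ => by
      rw [hfib D₁ hD₁, key D₁ hD₁])]
    rw [← Finset.sum_mul]
    ring
  -- Final assembly
  rw [step1, step2, Finset.sum_congr rfl step3]
  congr 1
  apply Finset.sum_congr rfl
  intro C hC
  have hconv : ∀ (K : Subgroup G) (τ : ↥K → ℂ),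
      (∑ᶠ D ∈ {D : Subgroup G | D ≤ K ∧ IsConjSub D C}, genAvg (extendChar K τ) D)
      = ∑ D ∈ Finset.univ.filter (fun D : Subgroup G => IsConjSub D C),
          genAvg (extendChar K τ) D := by
    intro K τ
    have hset : {D : Subgroup G | D ≤ K ∧ IsConjSub D C}
        = ↑(Finset.univ.filter (fun D : Subgroup G => D ≤ K ∧ IsConjSub D C)) := by
      ext D; simp
    rw [hset, finsum_mem_coe_finset]
    apply Finset.sum_subset
    · intro D hD
      simp only [Finset.mem_filter, Finset.mem_univ, true_and] at hD ⊢
      exact hD.2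
    · intro D hD hnD
      simp only [Finset.mem_filter, Finset.mem_univ, true_and] at hD hnD
      apply genAvg_eq_zero_of_not_le
      intro hleK
      exact hnD ⟨hleK, hD⟩
  rw [hconv H₁ τ₁, hconv H₂ τ₂, ← he₁, ← he₂]
end
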